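/- Let Λ be a nonempty compact topological space and U : Λ × Λ → ℝ symmetric and lower semicontinuous. Define the ground state energy E_g(N) = min over q ∈ Λ^N of ∑_{1≤i<j≤N} U(q_i,q_j), and the pair-specific ground state energy ε_g(N) = E_g(N)/(N(N-1)). Then for all N ≥ 2, E_g(N+1) ≥ ((N+1)/(N-1)) · E_g(N). -/

import Mathlib

/-- The total pairwise energy of a configuration of `N` points. -/
noncomputable def energy {Λ : Type*} (N : ℕ) (U : Λ → Λ → ℝ) (q : Fin N → Λ) : ℝ :=
  ∑ i : Fin N, ∑ j ∈ Finset.Ioi i, U (q i) (q j)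

/-- The ground state energy of `N` points in `Λ`. -/
noncomputable def Eg (Λ : Type*) (N : ℕ) (U : Λ → Λ → ℝ) : ℝ :=
  sInf (Set.range (energy (Λ := Λ) N U))

lemma lsc_bddBelow_range {X : Type*} [TopologicalSpace X] [CompactSpace X] [Nonempty X]
    {f : X → ℝ} (hf : LowerSemicontinuous f) : BddBelow (Set.range f) := by
  have hcov : (Set.univ : Set X) ⊆ ⋃ y : X, f ⁻¹' Set.Ioi (f y - 1) := by
    intro x _
    exact Set.mem_iUnion.2 ⟨x, by simp⟩
  obtain ⟨t, ht⟩ := isCompact_univ.elim_finite_subcover _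
    (fun y => hf.isOpen_preimage (f y - 1)) hcov
  have htne : t.Nonempty := by
    obtain ⟨x⟩ := ‹Nonempty X›
    obtain ⟨y, hy, -⟩ := Set.mem_iUnion₂.1 (ht (Set.mem_univ x))
    exact ⟨y, hy⟩
  refine ⟨t.inf' htne (fun y => f y - 1), ?_⟩
  rintro z ⟨x, rfl⟩
  obtain ⟨y, hy, hxy⟩ := Set.mem_iUnion₂.1 (ht (Set.mem_univ x))
  exact le_trans (Finset.inf'_le _ hy) (le_of_lt hxy)

lemma energy_lsc {Λ : Type*} [TopologicalSpace Λ] (N : ℕ) (U : Λ → Λ → ℝ)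
    (hlsc : LowerSemicontinuous (fun p : Λ × Λ => U p.1 p.2)) :
    LowerSemicontinuous (energy (Λ := Λ) N U) := by
  unfold energy
  refine lowerSemicontinuous_sum fun i _ => lowerSemicontinuous_sum fun j _ => ?_
  have hc : Continuous (fun q : Fin N → Λ => (q i, q j)) :=
    (continuous_apply i).prodMk (continuous_apply j)
  exact hlsc.comp hc

lemma energy_eq_pairs {Λ : Type*} (N : ℕ) (U : Λ → Λ → ℝ) (q : Fin N → Λ) :
    energy N U q = ∑ p ∈ Finset.univ.filter (fun p : Fin N × Fin N => p.1 < p.2),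
      U (q p.1) (q p.2) := by
  rw [Finset.sum_filter, ← Finset.univ_product_univ, Finset.sum_product, energy]
  refine Finset.sum_congr rfl fun i _ => ?_
  rw [← Finset.sum_filter]
  congr 1
  ext j
  simp

lemma energy_comp_succAbove {Λ : Type*} (N : ℕ) (U : Λ → Λ → ℝ) (q : Fin (N + 1) → Λ)
    (k : Fin (N + 1)) :
    energy N U (q ∘ k.succAbove) =
      ∑ p ∈ Finset.univ.filter
        (fun p : Fin (N + 1) × Fin (N + 1) => p.1 < p.2 ∧ p.1 ≠ k ∧ p.2 ≠ k),
        U (q p.1) (q p.2) := by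
  rw [energy_eq_pairs]
  refine Finset.sum_bij (fun p _ => (k.succAbove p.1, k.succAbove p.2)) ?_ ?_ ?_ ?_
  · intro p hp
    simp only [Finset.mem_filter, Finset.mem_univ, true_and] at hp ⊢
    exact ⟨(Fin.succAbove_lt_succAbove_iff).2 hp, k.succAbove_ne p.1, k.succAbove_ne p.2⟩
  · intro p hp p' hp' h
    simp only [Prod.mk.injEq] at h
    have inj := (Fin.strictMono_succAbove k).injective
    exact Prod.ext (inj h.1) (inj h.2)
  · intro p hp
    simp only [Finset.mem_filter, Finset.mem_univ, true_and] at hp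
    obtain ⟨i, hi⟩ := Fin.exists_succAbove_eq hp.2.1
    obtain ⟨j, hj⟩ := Fin.exists_succAbove_eq hp.2.2
    refine ⟨(i, j), ?_, ?_⟩
    · simp only [Finset.mem_filter, Finset.mem_univ, true_and]
      rw [← Fin.succAbove_lt_succAbove_iff (p := k), hi, hj]
      exact hp.1
    · simp [hi, hj]
  · intro p hp
    rfl

lemma sum_energy_delete {Λ : Type*} (N : ℕ) (U : Λ → Λ → ℝ) (q : Fin (N + 1) → Λ)
    (hN : 1 ≤ N) :
    ∑ k : Fin (N + 1), energy N U (q ∘ k.succAbove)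
      = ((N : ℝ) - 1) * energy (N + 1) U q := by
  have key : ∀ k : Fin (N + 1), energy N U (q ∘ k.succAbove) =
      ∑ p ∈ Finset.univ.filter (fun p : Fin (N + 1) × Fin (N + 1) => p.1 < p.2),
        (if p.1 ≠ k ∧ p.2 ≠ k then U (q p.1) (q p.2) else 0) := by
    intro k
    rw [energy_comp_succAbove]
    rw [show (Finset.univ.filter
        (fun p : Fin (N + 1) × Fin (N + 1) => p.1 < p.2 ∧ p.1 ≠ k ∧ p.2 ≠ k)) =
        ((Finset.univ.filter (fun p : Fin (N + 1) × Fin (N + 1) => p.1 < p.2)).filter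
          (fun p => p.1 ≠ k ∧ p.2 ≠ k)) by
      rw [Finset.filter_filter]]
    rw [Finset.sum_filter]
  simp_rw [key]
  rw [Finset.sum_comm]
  rw [energy_eq_pairs, Finset.mul_sum]
  refine Finset.sum_congr rfl fun p hp => ?_
  simp only [Finset.mem_filter, Finset.mem_univ, true_and] at hp
  rw [← Finset.sum_filter, Finset.sum_const]
  have hcard : (Finset.univ.filter (fun k : Fin (N + 1) => p.1 ≠ k ∧ p.2 ≠ k)).card
      = N - 1 := by
    have : (Finset.univ.filter (fun k : Fin (N + 1) => p.1 ≠ k ∧ p.2 ≠ k))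
        = ({p.1, p.2} : Finset (Fin (N + 1)))ᶜ := by
      ext k
      simp [eq_comm, not_or]
    rw [this, Finset.card_compl, Finset.card_pair (ne_of_lt hp), Fintype.card_fin]
    omega
  rw [hcard, nsmul_eq_mul]
  congr 1
  push_cast [Nat.cast_sub hN]
  ring

/-- `E_g(N+1) ≥ ((N+1)/(N-1)) · E_g(N)` for `N ≥ 2`. -/
theorem groundState_recursive_inequality {Λ : Type*} [TopologicalSpace Λ] [CompactSpace Λ]
    [Nonempty Λ] (U : Λ → Λ → ℝ) (hsym : ∀ x y, U x y = U y x)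
    (hlsc : LowerSemicontinuous (fun p : Λ × Λ => U p.1 p.2))
    (N : ℕ) (hN : 2 ≤ N) :
    Eg Λ (N + 1) U ≥ (((N : ℝ) + 1) / ((N : ℝ) - 1)) * Eg Λ N U := by
  have hN1 : (1 : ℝ) ≤ (N : ℝ) := by exact_mod_cast le_trans one_le_two hN
  have hpos : (0 : ℝ) < (N : ℝ) - 1 := by
    have : (2 : ℝ) ≤ (N : ℝ) := by exact_mod_cast hN
    linarith
  have hbdd : BddBelow (Set.range (energy (Λ := Λ) N U)) :=
    lsc_bddBelow_range (energy_lsc N U hlsc)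
  refine le_csInf (Set.range_nonempty _) ?_
  rintro b ⟨q, rfl⟩
  have hsum := sum_energy_delete N U q (le_trans one_le_two hN)
  have hterm : ∀ k : Fin (N + 1), Eg Λ N U ≤ energy N U (q ∘ k.succAbove) := fun k =>
    csInf_le hbdd (Set.mem_range_self _)
  have hge : ((N : ℝ) + 1) * Eg Λ N U ≤ ((N : ℝ) - 1) * energy (N + 1) U q := by
    rw [← hsum]
    calc ((N : ℝ) + 1) * Eg Λ N U = ∑ _k : Fin (N + 1), Eg Λ N U := by
          rw [Finset.sum_const, Finset.card_univ, Fintype.card_fin, nsmul_eq_mul]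
          push_cast; ring
      _ ≤ ∑ k : Fin (N + 1), energy N U (q ∘ k.succAbove) :=
          Finset.sum_le_sum fun k _ => hterm k
  rw [div_mul_eq_mul_div, div_le_iff₀ hpos]
  linarith [hge]
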